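/- arXiv:1708.08402 — 6 statements merged into one kernel-verified Lean document; each statement's English description precedes it below -/
import Mathlib

section
/- Let K/k be a finite Galois extension of fields of characteristic zero with Galois group G, let J ≤ G, and let F = K^J be the fixed field. If σ₁, ..., σ_r ∈ G satisfy σ₁(x) + ... + σ_r(x) = r·x for all x ∈ F, then each σ_i lies in J. -/
/-- If `K/k` is a finite Galois extension of characteristic-zero fields, `J` a subgroup of
the Galois group, `F = K^J` the fixed field, and `σ₁,…,σ_r` elements of the Galois group
with `σ₁(x) + ⋯ + σ_r(x) = r·x` for all `x ∈ F`, then each `σ_i ∈ J`. -/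
theorem stmt_0 {k K : Type*} [Field k] [Field K] [CharZero k] [Algebra k K]
    [FiniteDimensional k K] [IsGalois k K]
    (J : Subgroup (K ≃ₐ[k] K)) (r : ℕ) (σ : Fin r → (K ≃ₐ[k] K))
    (h : ∀ x ∈ IntermediateField.fixedField J, ∑ i, σ i x = (r : K) * x) :
    ∀ i, σ i ∈ J := by
  classical
  intro i
  set F := IntermediateField.fixedField J with hF
  haveI : CharZero K := charZero_of_injective_algebraMap (algebraMap k K).injective
  let f : Fin r → (F →* K) := fun j =>
    ((σ j : K →+* K).comp (algebraMap F K)).toMonoidHom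
  let ι : F →* K := (algebraMap F K).toMonoidHom
  have key : f i = ι := by
    by_contra hne
    have li := linearIndependent_monoidHom F K
    rw [linearIndependent_iff'] at li
    set s : Finset (F →* K) := insert ι (Finset.image f Finset.univ) with hs
    set g : (F →* K) → K := fun χ =>
      ((Finset.univ.filter fun j => f j = χ).card : K) - (if χ = ι then (r : K) else 0)
      with hg
    have hsum : ∑ χ ∈ s, g χ • ((χ : F → K)) = 0 := by
      funext x
      simp only [Finset.sum_apply, Pi.smul_apply, Pi.zero_apply, smul_eq_mul, hg, sub_mul]
      rw [Finset.sum_sub_distrib]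
      have h1 : ∑ χ ∈ s, ((Finset.univ.filter fun j => f j = χ).card : K) * χ x
          = ∑ j, f j x := by
        rw [← Finset.sum_fiberwise_of_maps_to (g := f) (fun j _ =>
          Finset.mem_insert_of_mem (Finset.mem_image_of_mem f (Finset.mem_univ j)))]
        refine Finset.sum_congr rfl fun χ _ => ?_
        rw [Finset.sum_congr rfl (fun j hj => ?_), Finset.sum_const, nsmul_eq_mul]
        exact congrArg (· x) (Finset.mem_filter.mp hj).2
      have h2 : ∑ χ ∈ s, (if χ = ι then (r : K) else 0) * χ x = (r : K) * ι x := by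
        rw [Finset.sum_congr rfl (fun χ _ => by rw [ite_mul, zero_mul]),
          Finset.sum_ite_eq' s ι (fun χ => (r : K) * χ x)]
        simp [hs]
      rw [h1, h2]
      have := h (x : K) x.2
      simp only [f, RingHom.toMonoidHom_eq_coe, MonoidHom.coe_coe, RingHom.coe_comp,
        Function.comp_apply] at *
      simpa [ι] using sub_eq_zero_of_eq this
    have hfi : f i ∈ s := by
      simp [hs, Finset.mem_insert, Finset.mem_image]
    have := li s g hsum (f i) hfi
    rw [hg] at this
    simp only [hne, if_false, sub_zero] at this
    have hcard : (Finset.univ.filter fun j => f j = f i).card = 0 := by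
      exact_mod_cast this
    have : i ∈ Finset.univ.filter fun j => f j = f i := by simp
    rw [Finset.card_eq_zero.mp hcard] at this
    exact absurd this (Finset.notMem_empty i)
  have hfix : ∀ x ∈ F, σ i x = x := by
    intro x hx
    have := congrArg (· (⟨x, hx⟩ : F)) key
    simpa [f, ι] using this
  rw [← IntermediateField.fixingSubgroup_fixedField J]
  exact fun x => hfix x x.2
end

section
/- Let G be a finite group, λ : G → Perm(G) its left regular representation, and let P ≤ Perm(G) be a semi-regular (fixed-point free) subgroup normalized by λ(G). Then J = {q(1_G) : q ∈ P} is a subgroup of G of order |P|. -/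
/-- If `P ≤ Perm(G)` is semi-regular (fixed-point free) and normalized by `λ(G)`, then
`J = {q(1) : q ∈ P}` is a subgroup of `G` of order `|P|`. -/
theorem stmt_3 {G : Type*} [Group G] [Finite G] (P : Subgroup (Equiv.Perm G))
    (hfree : ∀ q ∈ P, ∀ x : G, q x = x → q = 1)
    (hP : ∀ g : G, ∀ q ∈ P, Equiv.mulLeft g * q * (Equiv.mulLeft g)⁻¹ ∈ P) :
    ∃ J : Subgroup G,
      (J : Set G) = (fun q : Equiv.Perm G => q 1) '' (P : Set (Equiv.Perm G)) ∧
      Nat.card J = Nat.card P := by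
  set f : Equiv.Perm G → G := fun q => q 1 with hf
  have hinj : Set.InjOn f (P : Set (Equiv.Perm G)) := by
    intro q hq q' hq' h
    have hmem : q'⁻¹ * q ∈ P := mul_mem (inv_mem hq') hq
    have hfix : (q'⁻¹ * q) 1 = 1 := by
      simp only [Equiv.Perm.mul_apply]
      simp only [f] at h
      rw [h]
      exact q'.symm_apply_apply 1
    have := hfree _ hmem 1 hfix
    have : q = q' := by
      have h1 : q'⁻¹ * q = 1 := this
      calc q = q' * (q'⁻¹ * q) := by group
        _ = q' * 1 := by rw [h1]
        _ = q' := mul_one q'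
    exact this
  refine ⟨{
    carrier := f '' (P : Set (Equiv.Perm G))
    one_mem' := ⟨1, P.one_mem, rfl⟩
    mul_mem' := ?_
    inv_mem' := ?_ }, rfl, ?_⟩
  · rintro a b ⟨q, hq, rfl⟩ ⟨q', hq', rfl⟩
    refine ⟨Equiv.mulLeft (f q) * q' * (Equiv.mulLeft (f q))⁻¹ * q,
      mul_mem (hP (f q) q' hq') hq, ?_⟩
    simp [f, Equiv.Perm.mul_apply]
  · rintro a ⟨q, hq, rfl⟩
    refine ⟨Equiv.mulLeft (f q)⁻¹ * q⁻¹ * (Equiv.mulLeft (f q)⁻¹)⁻¹,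
      hP (f q)⁻¹ q⁻¹ (inv_mem hq), ?_⟩
    simp [f, Equiv.Perm.mul_apply]
  · show Nat.card ↥(f '' (P : Set (Equiv.Perm G))) = Nat.card ↥P
    rw [Nat.card_image_of_injOn hinj]
    rfl
end

section
/- Let G be a finite group, λ : G → Perm(G) the left regular representation. The map Ψ sending a subgroup P of Perm(G) normalized by λ(G) to the orbit Orb_P(1_G) = {q(1_G) : q ∈ P} is injective on the set of subgroups of a fixed regular subgroup N ≤ Perm(G) normalized by λ(G): if P₁, P₂ ≤ N are both normalized by λ(G) and Orb_{P₁}(1_G) = Orb_{P₂}(1_G), then P₁ = P₂. -/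
/-- The map `Ψ(P) = Orb_P(1)` is injective on subgroups of a fixed regular subgroup
`N ≤ Perm(G)` normalized by `λ(G)`, among those subgroups normalized by `λ(G)`. -/
theorem stmt_4 {G : Type*} [Group G] [Finite G] (N : Subgroup (Equiv.Perm G))
    (htrans : ∀ x y : G, ∃ n ∈ N, n x = y)
    (hfree : ∀ n ∈ N, ∀ x : G, n x = x → n = 1)
    (hN : ∀ g : G, ∀ n ∈ N, Equiv.mulLeft g * n * (Equiv.mulLeft g)⁻¹ ∈ N)
    (P₁ P₂ : Subgroup (Equiv.Perm G)) (hP₁N : P₁ ≤ N) (hP₂N : P₂ ≤ N)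
    (hP₁ : ∀ g : G, ∀ q ∈ P₁, Equiv.mulLeft g * q * (Equiv.mulLeft g)⁻¹ ∈ P₁)
    (hP₂ : ∀ g : G, ∀ q ∈ P₂, Equiv.mulLeft g * q * (Equiv.mulLeft g)⁻¹ ∈ P₂)
    (horb : (fun q : Equiv.Perm G => q 1) '' (P₁ : Set (Equiv.Perm G)) =
            (fun q : Equiv.Perm G => q 1) '' (P₂ : Set (Equiv.Perm G))) :
    P₁ = P₂ := by
  -- Two elements of `N` agreeing at one point are equal.
  have key : ∀ p ∈ N, ∀ q ∈ N, p 1 = q 1 → p = q := by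
    intro p hp q hq h
    have h1 : (p * q⁻¹) (q 1) = q 1 := by
      simp [Equiv.Perm.mul_apply, h]
    have := hfree (p * q⁻¹) (mul_mem hp (inv_mem hq)) (q 1) h1
    have : p * q⁻¹ * q = q := by rw [this, one_mul]
    simpa using this
  ext p
  constructor
  · intro hp
    have : (fun q : Equiv.Perm G => q 1) p ∈
        (fun q : Equiv.Perm G => q 1) '' (P₂ : Set (Equiv.Perm G)) := by
      rw [← horb]; exact Set.mem_image_of_mem _ hp
    obtain ⟨q, hq, hq1⟩ := this
    rwa [key p (hP₁N hp) q (hP₂N hq) hq1.symm]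
  · intro hp
    have : (fun q : Equiv.Perm G => q 1) p ∈
        (fun q : Equiv.Perm G => q 1) '' (P₁ : Set (Equiv.Perm G)) := by
      rw [horb]; exact Set.mem_image_of_mem _ hp
    obtain ⟨q, hq, hq1⟩ := this
    rwa [key p (hP₂N hp) q (hP₁N hq) hq1.symm]
end

section
/- Let G be a finite group, N ≤ Perm(G) a regular subgroup normalized by λ(G), and P ⊴ N normalized by λ(G) with J = Orb_P(1_G). Then the induced action of N on the set of left cosets {gJ : g ∈ G} factors through N/P, and N/P acts regularly (transitively and freely) on this set of cosets. -/
/-- With `N ≤ Perm(G)` regular normalized by `λ(G)` and `P ⊴ N` normalized by `λ(G)`,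
`J = Orb_P(1)`, the action of `N` on the set of left cosets of `J` factors through `N/P`
(elements in the same coset of `P` induce the same permutation of cosets), and the induced
action of `N/P` on the cosets is transitive and free. -/
theorem stmt_7 {G : Type*} [Group G] [Finite G] (N P : Subgroup (Equiv.Perm G))
    (htrans : ∀ x y : G, ∃ n ∈ N, n x = y)
    (hfree : ∀ n ∈ N, ∀ x : G, n x = x → n = 1)
    (hN : ∀ g : G, ∀ n ∈ N, Equiv.mulLeft g * n * (Equiv.mulLeft g)⁻¹ ∈ N)
    (hPN : P ≤ N) (hnormal : ∀ n ∈ N, ∀ q ∈ P, n * q * n⁻¹ ∈ P)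
    (hP : ∀ g : G, ∀ q ∈ P, Equiv.mulLeft g * q * (Equiv.mulLeft g)⁻¹ ∈ P) :
    (∀ n ∈ N, ∀ n' ∈ N, n⁻¹ * n' ∈ P →
      ∀ S ∈ {S : Set G | ∃ g : G, S = (fun x => g * x) ''
          ((fun q : Equiv.Perm G => q 1) '' (P : Set (Equiv.Perm G)))},
        (⇑n) '' S = (⇑n') '' S) ∧
    (∀ S ∈ {S : Set G | ∃ g : G, S = (fun x => g * x) ''
          ((fun q : Equiv.Perm G => q 1) '' (P : Set (Equiv.Perm G)))},
      ∀ T ∈ {S : Set G | ∃ g : G, S = (fun x => g * x) ''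
          ((fun q : Equiv.Perm G => q 1) '' (P : Set (Equiv.Perm G)))},
        ∃ n ∈ N, (⇑n) '' S = T) ∧
    (∀ n ∈ N, (∃ S ∈ {S : Set G | ∃ g : G, S = (fun x => g * x) ''
          ((fun q : Equiv.Perm G => q 1) '' (P : Set (Equiv.Perm G)))},
        (⇑n) '' S = S) → n ∈ P) := by
  classical
  set orb : G → Set G := fun g => (fun q : Equiv.Perm G => q g) '' (P : Set (Equiv.Perm G))
    with horb
  have key : ∀ g : G, (fun x => g * x) ''
      ((fun q : Equiv.Perm G => q 1) '' (P : Set (Equiv.Perm G))) = orb g := by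
    intro g
    ext x
    simp only [horb, Set.mem_image, SetLike.mem_coe]
    constructor
    · rintro ⟨y, ⟨q, hq, rfl⟩, rfl⟩
      refine ⟨Equiv.mulLeft g * q * (Equiv.mulLeft g)⁻¹, hP g q hq, ?_⟩
      simp [Equiv.Perm.mul_apply]
    · rintro ⟨q, hq, rfl⟩
      refine ⟨(Equiv.mulLeft g⁻¹ * q * (Equiv.mulLeft g⁻¹)⁻¹) 1,
        ⟨_, hP g⁻¹ q hq, rfl⟩, ?_⟩
      simp [Equiv.Perm.mul_apply]
  have key2 : ∀ n ∈ N, ∀ g : G, (⇑n) '' orb g = orb (n g) := by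
    intro n hn g
    ext x
    simp only [horb, Set.mem_image, SetLike.mem_coe]
    constructor
    · rintro ⟨y, ⟨q, hq, rfl⟩, rfl⟩
      exact ⟨n * q * n⁻¹, hnormal n hn q hq, by simp [Equiv.Perm.mul_apply]⟩
    · rintro ⟨q, hq, rfl⟩
      exact ⟨(n⁻¹ * q * n) g, ⟨n⁻¹ * q * n, hnormal n⁻¹ (inv_mem hn) q hq, rfl⟩,
        by simp [Equiv.Perm.mul_apply]⟩
  have key3 : ∀ g g' : G, g' ∈ orb g → orb g' = orb g := by
    intro g g' hg'
    simp only [horb, Set.mem_image, SetLike.mem_coe] at hg'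
    obtain ⟨q, hq, rfl⟩ := hg'
    ext x
    simp only [horb, Set.mem_image, SetLike.mem_coe]
    constructor
    · rintro ⟨q', hq', rfl⟩
      exact ⟨q' * q, mul_mem hq' hq, by simp [Equiv.Perm.mul_apply]⟩
    · rintro ⟨q', hq', rfl⟩
      exact ⟨q' * q⁻¹, mul_mem hq' (inv_mem hq), by simp [Equiv.Perm.mul_apply]⟩
  refine ⟨?_, ?_, ?_⟩
  · rintro n hn n' hn' hp S ⟨g, rfl⟩
    rw [key g, key2 n hn g, key2 n' hn' g]
    have h : n' g ∈ orb (n g) := by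
      refine ⟨n * (n⁻¹ * n') * n⁻¹, hnormal n hn _ hp, ?_⟩
      simp [Equiv.Perm.mul_apply]
    exact (key3 (n g) (n' g) h).symm
  · rintro S ⟨g, rfl⟩ T ⟨g', rfl⟩
    obtain ⟨n, hn, hng⟩ := htrans g g'
    exact ⟨n, hn, by rw [key g, key g', key2 n hn g, hng]⟩
  · rintro n hn ⟨S, ⟨g, rfl⟩, hS⟩
    rw [key g, key2 n hn g] at hS
    have hng : n g ∈ orb g := by
      rw [← hS]
      exact ⟨1, P.one_mem, by simp⟩
    obtain ⟨q, hq, hqg⟩ := hng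
    have h1 : q⁻¹ * n = 1 := by
      refine hfree _ (mul_mem (inv_mem (hPN hq)) hn) g ?_
      simp only [Equiv.Perm.mul_apply]
      rw [← hqg]
      simp
    have h2 : q = n := by rwa [inv_mul_eq_one] at h1
    rw [← h2]
    exact hq
end

section
/- Let G be a finite group with normal subgroup J ⊴ G, let N ≤ Perm(G) be regular and normalized by λ(G), let P ⊴ N be normalized by λ(G) with Orb_P(1_G) = J. Then for all γ ∈ G, h₁, h₂ ∈ J, n ∈ N, and q ∈ P, the permutation λ(γh₁) ∘ n ∘ q ∘ λ(γ⁻¹h₂) sends each left coset g_iJ to the coset γ·n(γ⁻¹g_i)·J. -/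
section aux

variable {G : Type*} [Group G] (J : Subgroup G)

private lemma memC_stmt9 (x a : G) :
    a ∈ (fun y => x * y) '' (J : Set G) ↔ x⁻¹ * a ∈ J := by
  constructor
  · rintro ⟨j, hj, rfl⟩; simpa using hj
  · intro h; exact ⟨x⁻¹ * a, h, by group⟩

private lemma Ceq_stmt9 {x y : G} (h : x⁻¹ * y ∈ J) :
    (fun z => x * z) '' (J : Set G) = (fun z => y * z) '' (J : Set G) := by
  ext a
  rw [memC_stmt9, memC_stmt9]
  constructor
  · intro ha
    have := mul_mem (inv_mem h) ha
    simpa [mul_assoc] using this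
  · intro ha
    have := mul_mem h ha
    simpa [mul_assoc] using this

end aux

/-- With `J ⊴ G` normal, `N ≤ Perm(G)` regular normalized by `λ(G)`, `P ⊴ N` normalized
by `λ(G)` with `Orb_P(1) = J`: for all `γ ∈ G`, `h₁, h₂ ∈ J`, `n ∈ N`, `q ∈ P`, the
permutation `λ(γh₁) ∘ n ∘ q ∘ λ(γ⁻¹h₂)` sends each left coset `gJ` to `γ·n(γ⁻¹g)·J`. -/
theorem stmt_9 {G : Type*} [Group G] [Finite G] (J : Subgroup G) [J.Normal]
    (N P : Subgroup (Equiv.Perm G))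
    (htrans : ∀ x y : G, ∃ n ∈ N, n x = y)
    (hfree : ∀ n ∈ N, ∀ x : G, n x = x → n = 1)
    (hN : ∀ g : G, ∀ n ∈ N, Equiv.mulLeft g * n * (Equiv.mulLeft g)⁻¹ ∈ N)
    (hPN : P ≤ N) (hnormal : ∀ n ∈ N, ∀ q ∈ P, n * q * n⁻¹ ∈ P)
    (hP : ∀ g : G, ∀ q ∈ P, Equiv.mulLeft g * q * (Equiv.mulLeft g)⁻¹ ∈ P)
    (hJ : (fun q : Equiv.Perm G => q 1) '' (P : Set (Equiv.Perm G)) = (J : Set G)) :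
    ∀ γ : G, ∀ h₁ ∈ J, ∀ h₂ ∈ J, ∀ n ∈ N, ∀ q ∈ P, ∀ g : G,
      (⇑(Equiv.mulLeft (γ * h₁) * n * q * Equiv.mulLeft (γ⁻¹ * h₂))) ''
          ((fun x => g * x) '' (J : Set G)) =
        (fun x => (γ * n (γ⁻¹ * g)) * x) '' (J : Set G) := by
  have hnorm : J.Normal := inferInstance
  set C : G → Set G := fun x => (fun y => x * y) '' (J : Set G) with hC
  -- orbit of x under P is the coset C x
  have horbit : ∀ x y : G, y ∈ C x ↔ ∃ p ∈ P, p x = y := by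
    intro x y
    rw [hC]
    simp only [memC_stmt9]
    constructor
    · intro h
      have : x⁻¹ * y ∈ ((fun q : Equiv.Perm G => q 1) '' (P : Set (Equiv.Perm G))) := by
        rw [hJ]; exact h
      obtain ⟨p0, hp0, hp0e⟩ := this
      refine ⟨Equiv.mulLeft x * p0 * (Equiv.mulLeft x)⁻¹, hP x p0 hp0, ?_⟩
      have : ((Equiv.mulLeft x * p0 * (Equiv.mulLeft x)⁻¹ : Equiv.Perm G)) x
          = x * p0 (x⁻¹ * x) := by
        simp [Equiv.Perm.mul_apply]
      have hp0e' : p0 1 = x⁻¹ * y := hp0e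
      rw [this, inv_mul_cancel, hp0e']
      group
    · rintro ⟨p, hp, rfl⟩
      have hmem : (Equiv.mulLeft x⁻¹ * p * (Equiv.mulLeft x⁻¹)⁻¹ : Equiv.Perm G) 1
          ∈ ((fun q : Equiv.Perm G => q 1) '' (P : Set (Equiv.Perm G))) :=
        ⟨_, hP x⁻¹ p hp, rfl⟩
      rw [hJ] at hmem
      have : ((Equiv.mulLeft x⁻¹ * p * (Equiv.mulLeft x⁻¹)⁻¹ : Equiv.Perm G)) 1
          = x⁻¹ * p x := by
        simp [Equiv.Perm.mul_apply]
      rwa [this] at hmem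
  -- an element of N maps cosets to cosets (subset direction)
  have hsub : ∀ m ∈ N, ∀ x : G, ⇑m '' C x ⊆ C (m x) := by
    intro m hm x a ha
    obtain ⟨b, hb, rfl⟩ := ha
    obtain ⟨p, hp, rfl⟩ := (horbit x b).1 hb
    rw [horbit]
    refine ⟨m * p * m⁻¹, hnormal m hm p hp, ?_⟩
    simp [Equiv.Perm.mul_apply]
  have himg : ∀ m ∈ N, ∀ x : G, ⇑m '' C x = C (m x) := by
    intro m hm x
    refine le_antisymm (hsub m hm x) ?_
    have h2 := hsub m⁻¹ (inv_mem hm) (m x)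
    rw [show m⁻¹ (m x) = x from m.symm_apply_apply x] at h2
    intro a ha
    have : m⁻¹ a ∈ C x := h2 ⟨a, ha, rfl⟩
    exact ⟨m⁻¹ a, this, by simp⟩
  -- elements of P fix cosets
  have hPimg : ∀ p ∈ P, ∀ x : G, ⇑p '' C x = C x := by
    intro p hp x
    rw [himg p (hPN hp) x]
    obtain ⟨p', hp', hpx⟩ := (horbit x (p x)).2 ⟨p, hp, rfl⟩
    apply (Ceq_stmt9 J _).symm
    have : x⁻¹ * p x ∈ J := by
      rw [← memC_stmt9 J]
      exact (horbit x (p x)).2 ⟨p, hp, rfl⟩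
    exact this
  -- left translations map cosets to cosets
  have hLimg : ∀ a x : G, ⇑(Equiv.mulLeft a) '' C x = C (a * x) := by
    intro a x
    rw [hC]
    rw [Set.image_image]
    simp only [Equiv.coe_mulLeft, mul_assoc]
  intro γ h₁ hh₁ h₂ hh₂ n hn q hq g
  have coe : ⇑(Equiv.mulLeft (γ * h₁) * n * q * Equiv.mulLeft (γ⁻¹ * h₂)) ''
      ((fun x => g * x) '' (J : Set G))
      = ⇑(Equiv.mulLeft (γ * h₁)) '' (⇑n '' (⇑q '' (⇑(Equiv.mulLeft (γ⁻¹ * h₂)) '' C g))) := by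
    simp only [Equiv.Perm.coe_mul, Set.image_comp, hC]
  rw [coe, hLimg]
  have e1 : C ((γ⁻¹ * h₂) * g) = C (γ⁻¹ * g) := by
    apply Ceq_stmt9
    have : g⁻¹ * h₂⁻¹ * g ∈ J := by
      have := hnorm.conj_mem h₂⁻¹ (inv_mem hh₂) g⁻¹
      simpa [mul_assoc] using this
    simpa [mul_assoc] using this
  rw [e1, hPimg q hq, himg n hn, hLimg]
  show C ((γ * h₁) * (n (γ⁻¹ * g))) = C (γ * n (γ⁻¹ * g))
  apply Ceq_stmt9
  set n' := n (γ⁻¹ * g)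
  have : n'⁻¹ * h₁⁻¹ * n' ∈ J := by
    have := hnorm.conj_mem h₁⁻¹ (inv_mem hh₁) n'⁻¹
    simpa [mul_assoc] using this
  simpa [mul_assoc] using this
end

section
/- Let G be a finite group and N ≤ Perm(G) a regular subgroup normalized by λ(G). Suppose |G| = mp with p prime, gcd(p, m) = 1, and p > m. Then the Sylow p-subgroup P of N is unique (hence characteristic in N and normalized by λ(G)), and Orb_P(1_G) is the unique Sylow p-subgroup of G, which is therefore normal in G. -/
lemma aux_unique_p_subgroup {H : Type*} [Group H] [Finite H] {m p : ℕ} (hp : p.Prime)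
    (hcard : Nat.card H = m * p) (hcop : Nat.Coprime p m) (hpm : m < p) :
    ∃ P : Subgroup H, Nat.card P = p ∧ (∀ Q : Subgroup H, Nat.card Q = p → Q = P) ∧ P.Normal := by
  have : Fact p.Prime := ⟨hp⟩
  have hm0 : m ≠ 0 := by
    rintro rfl
    simpa [hcard] using Nat.card_pos (α := H)
  have hfact : (Nat.card H).factorization p = 1 := by
    rw [hcard, Nat.factorization_mul hm0 hp.pos.ne', Finsupp.add_apply,
      Nat.factorization_eq_zero_of_not_dvd ((Nat.Prime.coprime_iff_not_dvd hp).mp hcop),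
      Nat.Prime.factorization_self hp]
  obtain ⟨P⟩ : Nonempty (Sylow p H) := inferInstance
  have hcardP : Nat.card P = p := by
    rw [Sylow.card_eq_multiplicity, hfact, pow_one]
  have hindex : (P : Subgroup H).index = m := by
    have h1 := Subgroup.card_mul_index (P : Subgroup H)
    rw [hcardP, hcard] at h1
    have h2 : p * (P : Subgroup H).index = p * m := by rw [h1, mul_comm]
    exact Nat.eq_of_mul_eq_mul_left hp.pos h2
  have hn : Nat.card (Sylow p H) = 1 := by
    have h1 : Nat.card (Sylow p H) % p = 1 % p := card_sylow_modEq_one p H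
    have h2 := Sylow.card_dvd_index P
    rw [hindex] at h2
    have hle : Nat.card (Sylow p H) ≤ m := Nat.le_of_dvd (Nat.pos_of_ne_zero hm0) h2
    rw [Nat.mod_eq_of_lt (lt_of_le_of_lt hle hpm), Nat.mod_eq_of_lt hp.one_lt] at h1
    exact h1
  have hsub : Subsingleton (Sylow p H) := (Nat.card_eq_one_iff_unique.mp hn).1
  have huniq : ∀ Q : Subgroup H, Nat.card Q = p → Q = P := by
    intro Q hQ
    have hQp : IsPGroup p Q := IsPGroup.of_card (by rw [hQ, pow_one])
    obtain ⟨R, hR⟩ := hQp.exists_le_sylow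
    have hRP : R = P := Subsingleton.elim _ _
    rw [hRP] at hR
    exact Subgroup.eq_of_le_of_card_ge hR (by rw [hQ, hcardP])
  refine ⟨P, hcardP, huniq, ?_⟩
  constructor
  intro x hx g
  have hQcard : Nat.card ((P : Subgroup H).map (MulAut.conj g).toMonoidHom) = p := by
    have h3 := Nat.card_congr
      (Subgroup.equivMapOfInjective (P : Subgroup H) _ (by exact (MulAut.conj g).injective : Function.Injective ⇑(MulAut.conj g).toMonoidHom)).toEquiv
    rw [← h3, hcardP]
  have heq := huniq _ hQcard
  have hmem : (MulAut.conj g).toMonoidHom x ∈ (P : Subgroup H).map (MulAut.conj g).toMonoidHom :=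
    Subgroup.mem_map_of_mem _ hx
  rw [heq] at hmem
  simpa using hmem

/-- If `|G| = m·p` with `p` prime, `gcd(p,m) = 1` and `p > m`, and `N ≤ Perm(G)` is a
regular subgroup normalized by `λ(G)`, then `N` has a unique Sylow `p`-subgroup `P`
(hence characteristic, hence normalized by `λ(G)`), and `Orb_P(1)` is the unique Sylow
`p`-subgroup `J` of `G`, which is therefore normal in `G`. -/
theorem stmt_16 {G : Type*} [Group G] [Finite G] {m p : ℕ} (hp : p.Prime)
    (hcard : Nat.card G = m * p) (hcop : Nat.Coprime p m) (hpm : m < p)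
    (N : Subgroup (Equiv.Perm G))
    (htrans : ∀ x y : G, ∃ n ∈ N, n x = y)
    (hfree : ∀ n ∈ N, ∀ x : G, n x = x → n = 1)
    (hN : ∀ g : G, ∀ n ∈ N, Equiv.mulLeft g * n * (Equiv.mulLeft g)⁻¹ ∈ N) :
    ∃ P : Subgroup (Equiv.Perm G), P ≤ N ∧ Nat.card P = p ∧
      (∀ Q : Subgroup (Equiv.Perm G), Q ≤ N → Nat.card Q = p → Q = P) ∧
      (∀ g : G, ∀ q ∈ P, Equiv.mulLeft g * q * (Equiv.mulLeft g)⁻¹ ∈ P) ∧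
      ∃ J : Subgroup G,
        (J : Set G) = (fun q : Equiv.Perm G => q 1) '' (P : Set (Equiv.Perm G)) ∧
        Nat.card J = p ∧ (∀ J' : Subgroup G, Nat.card J' = p → J' = J) ∧ J.Normal := by
  -- |N| = |G|
  have hcardN : Nat.card ↥N = m * p := by
    rw [← hcard]
    refine Nat.card_eq_of_bijective (fun n : ↥N => (n : Equiv.Perm G) 1) ⟨?_, ?_⟩
    · intro a b hab
      have h1 : ((b⁻¹ * a : ↥N) : Equiv.Perm G) 1 = 1 := by
        simp only [Subgroup.coe_mul, Subgroup.coe_inv, Equiv.Perm.mul_apply]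
        simp only at hab
        rw [hab, (by exact Equiv.symm_apply_apply _ _ : (b : Equiv.Perm G)⁻¹ ((b : Equiv.Perm G) 1) = 1)]
      have h2 := hfree _ (b⁻¹ * a : ↥N).2 1 h1
      have : (b⁻¹ * a : ↥N) = 1 := Subtype.ext h2
      have := inv_mul_eq_one.mp this
      exact this.symm
    · intro y
      obtain ⟨n, hn, h⟩ := htrans 1 y
      exact ⟨⟨n, hn⟩, h⟩
  obtain ⟨P', hP'card, hP'uniq, _⟩ := aux_unique_p_subgroup hp hcardN hcop hpm
  set P : Subgroup (Equiv.Perm G) := P'.map N.subtype with hPdef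
  have hPle : P ≤ N := Subgroup.map_subtype_le P'
  have hPcard : Nat.card P = p := by
    have h3 := Nat.card_congr (Subgroup.equivMapOfInjective P' N.subtype N.subtype_injective).toEquiv
    rw [← h3, hP'card]
  have hPuniq : ∀ Q : Subgroup (Equiv.Perm G), Q ≤ N → Nat.card Q = p → Q = P := by
    intro Q hQle hQcard
    have h1 : Nat.card (Q.subgroupOf N) = p := by
      rw [Nat.card_congr (Subgroup.subgroupOfEquivOfLe hQle).toEquiv, hQcard]
    have h2 := congrArg (Subgroup.map N.subtype) (hP'uniq _ h1)
    rwa [Subgroup.subgroupOf_map_subtype, inf_eq_left.mpr hQle] at h2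
  have hconj : ∀ g : G, ∀ q ∈ P, Equiv.mulLeft g * q * (Equiv.mulLeft g)⁻¹ ∈ P := by
    intro g q hq
    set f := (MulAut.conj (Equiv.mulLeft g)).toMonoidHom with hf
    have hQle : P.map f ≤ N := by
      rintro _ ⟨r, hr, rfl⟩
      simpa [hf, MulAut.conj_apply] using hN g r (hPle hr)
    have hQcard : Nat.card (P.map f) = p := by
      have h3 := Nat.card_congr (Subgroup.equivMapOfInjective P f
        (by exact (MulAut.conj (Equiv.mulLeft g)).injective :
          Function.Injective ⇑f)).toEquiv
      rw [← h3, hPcard]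
    have heq := hPuniq _ hQle hQcard
    have hmem : f q ∈ P.map f := Subgroup.mem_map_of_mem _ hq
    rw [heq] at hmem
    simpa [hf, MulAut.conj_apply] using hmem
  -- the orbit of 1 under P
  have hinjOn : Set.InjOn (fun q : Equiv.Perm G => q 1) (P : Set (Equiv.Perm G)) := by
    intro a ha b hb hab
    simp only at hab
    have h1 : (b⁻¹ * a) 1 = 1 := by
      rw [Equiv.Perm.mul_apply, hab, (by exact Equiv.symm_apply_apply _ _ : b⁻¹ (b 1) = 1)]
    have h2 := hfree _ (mul_mem (inv_mem (hPle hb)) (hPle ha)) 1 h1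
    exact (inv_mul_eq_one.mp h2).symm
  let J : Subgroup G :=
    { carrier := (fun q : Equiv.Perm G => q 1) '' (P : Set (Equiv.Perm G))
      one_mem' := ⟨1, P.one_mem, rfl⟩
      mul_mem' := by
        rintro s t ⟨q, hq, rfl⟩ ⟨q', hq', rfl⟩
        refine ⟨(Equiv.mulLeft (q 1) * q' * (Equiv.mulLeft (q 1))⁻¹) * q,
          mul_mem (hconj (q 1) q' hq') hq, ?_⟩
        simp [Equiv.Perm.mul_apply]
      inv_mem' := by
        rintro s ⟨q, hq, rfl⟩
        refine ⟨Equiv.mulLeft (q 1)⁻¹ * q⁻¹ * (Equiv.mulLeft (q 1)⁻¹)⁻¹,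
          hconj (q 1)⁻¹ q⁻¹ (inv_mem hq), ?_⟩
        simp [Equiv.Perm.mul_apply] }
  have hJcoe : (J : Set G) = (fun q : Equiv.Perm G => q 1) '' (P : Set (Equiv.Perm G)) := rfl
  have hJcard : Nat.card J = p := by
    have h1 : Nat.card J = Set.ncard (J : Set G) := by
      rw [← Nat.card_coe_set_eq]
      exact Nat.card_congr (Equiv.refl _)
    rw [h1, hJcoe, Set.ncard_image_of_injOn hinjOn, ← Nat.card_coe_set_eq,
      SetLike.coe_sort_coe, hPcard]
  obtain ⟨J₀, hJ₀card, hJ₀uniq, hJ₀norm⟩ := aux_unique_p_subgroup hp hcard hcop hpm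
  have hJJ₀ : J = J₀ := hJ₀uniq J hJcard
  exact ⟨P, hPle, hPcard, hPuniq, hconj, J, hJcoe, hJcard,
    fun J' h => (hJ₀uniq J' h).trans hJJ₀.symm, hJJ₀ ▸ hJ₀norm⟩
end
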